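/- For every natural number n ≥ 2, the 1-Grassmannian constant satisfies μ_{n+2,n} = (2/n)·cos(π/(n+2)). -/

import Mathlib

open scoped RealInnerProductSpace
abbrev E (n : ℕ) := EuclideanSpace ℝ (Fin n)
noncomputable def cohF {n m : ℕ} (x : Fin m → E n) : ℝ :=
  sSup {r : ℝ | ∃ i j : Fin m, i ≠ j ∧ r = |⟪x i, x j⟫|}
noncomputable def muConst (m n : ℕ) : ℝ :=
  sInf {r : ℝ | ∃ x : Fin m → E n, (∀ i, ‖x i‖ = 1) ∧
    (∀ v : E n, ∑ i, ⟪x i, v⟫ • x i = ((m : ℝ) / n) • v) ∧ cohF x = r}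

open Real

lemma inner_E {N : ℕ} (x y : E N) : ⟪x,y⟫ = ∑ a, x a * y a := by
  rw [PiLp.inner_apply]; simp [mul_comm]

noncomputable def harm (m : ℕ) : Fin m → E 2 :=
  fun k => WithLp.toLp 2 (fun c => if c = 0 then Real.cos (k * π / m) else Real.sin (k * π / m) : Fin 2 → ℝ)

lemma harm_norm {m : ℕ} (k : Fin m) : ‖harm m k‖ = 1 := by
  have h : ‖harm m k‖^2 = 1 := by
    rw [← real_inner_self_eq_norm_sq, inner_E, Fin.sum_univ_two]
    show (Real.cos _ * Real.cos _) + (Real.sin _ * Real.sin _) = 1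
    have := Real.sin_sq_add_cos_sq (((k:ℕ):ℝ) * π / m)
    nlinarith [this]
  nlinarith [norm_nonneg (harm m k)]

lemma tight_coord {N m : ℕ} {x : Fin m → E N} {c : ℝ}
    (hxt : ∀ v : E N, ∑ i, ⟪x i, v⟫ • x i = c • v) (a b : Fin N) :
    ∑ i, x i a * x i b = c * (if a = b then 1 else 0) := by
  have h := congrArg (fun v : E N => v a) (hxt (EuclideanSpace.single b 1))
  beta_reduce at h
  rw [WithLp.ofLp_sum, Finset.sum_apply] at h
  simp only [PiLp.smul_apply, smul_eq_mul] at h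
  have h2 : ∀ i, ⟪x i, EuclideanSpace.single b (1:ℝ)⟫ = x i b := by
    intro i; simp [EuclideanSpace.inner_single_right]
  simp only [h2] at h
  calc ∑ i, x i a * x i b = ∑ i, x i b * x i a := by simp [mul_comm]
    _ = c * EuclideanSpace.single b 1 a := h
    _ = c * (if a = b then 1 else 0) := by
        by_cases hab : a = b <;> simp [hab, EuclideanSpace.single_apply, eq_comm]

lemma naimark {p q m : ℕ} (hp : 0 < p) (hq : 0 < q) (hm : m = p + q)
    (x : Fin m → E p) (hx1 : ∀ i, ‖x i‖ = 1)
    (hxt : ∀ v : E p, ∑ i, ⟪x i, v⟫ • x i = ((m : ℝ) / p) • v) :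
    ∃ y : Fin m → E q, (∀ i, ‖y i‖ = 1) ∧
      (∀ v : E q, ∑ i, ⟪y i, v⟫ • y i = ((m : ℝ) / q) • v) ∧
      (∀ i j, i ≠ j → ⟪y i, y j⟫ = -((p:ℝ)/q) * ⟪x i, x j⟫) := by
  have hmp : 0 < m := by omega
  have hmR : (0:ℝ) < m := by exact_mod_cast hmp
  have hpR : (0:ℝ) < p := by exact_mod_cast hp
  have hqR : (0:ℝ) < q := by exact_mod_cast hq
  -- rows of the scaled synthesis matrix
  set w : Fin p → E m := fun a => WithLp.toLp 2 (fun i => Real.sqrt (p / m) * x i a : Fin m → ℝ) with hw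
  have hsq : Real.sqrt ((p:ℝ) / m) * Real.sqrt ((p:ℝ) / m) = (p:ℝ)/m :=
    Real.mul_self_sqrt (by positivity)
  have hcoord := tight_coord hxt
  have hwin : ∀ a b, ⟪w a, w b⟫ = if a = b then (1:ℝ) else 0 := by
    intro a b
    rw [inner_E]
    have h1 : ∀ i : Fin m, w a i * w b i = ((p:ℝ)/m) * (x i a * x i b) := by
      intro i; show (Real.sqrt _ * x i a) * (Real.sqrt _ * x i b) = _
      rw [mul_mul_mul_comm, hsq]
    rw [Finset.sum_congr rfl (fun i _ => h1 i), ← Finset.mul_sum, hcoord a b]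
    by_cases hab : a = b <;> field_simp [hab]
  -- extend to an orthonormal basis indexed by Fin p ⊕ Fin q
  have hcard : Module.finrank ℝ (E m) = Fintype.card (Fin p ⊕ Fin q) := by
    simp [hm]
  have horth : Orthonormal ℝ ((Set.range (Sum.inl : Fin p → Fin p ⊕ Fin q)).restrict
      (Sum.elim w (fun _ => 0))) := by
    rw [orthonormal_iff_ite]
    rintro ⟨i, hi⟩ ⟨j, hj⟩
    obtain ⟨a, rfl⟩ := id hi
    obtain ⟨b, rfl⟩ := id hj
    show ⟪w a, w b⟫ = _
    rw [hwin a b]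
    by_cases hab : a = b <;> simp [hab, Subtype.ext_iff]
  obtain ⟨B, hB⟩ := horth.exists_orthonormalBasis_extension_of_card_eq hcard
  have hBw : ∀ a : Fin p, B (Sum.inl a) = w a := fun a =>
    hB (Sum.inl a) (Set.mem_range_self a)
  -- column orthogonality (Parseval)
  have hcol : ∀ i j : Fin m, ∑ t, B t i * B t j = if i = j then (1:ℝ) else 0 := by
    intro i j
    have h := B.sum_inner_mul_inner (EuclideanSpace.single i (1:ℝ))
      (EuclideanSpace.single j (1:ℝ))
    have h2 : ∀ t, ⟪EuclideanSpace.single i (1:ℝ), B t⟫ * ⟪B t, EuclideanSpace.single j (1:ℝ)⟫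
        = B t i * B t j := by
      intro t
      simp [EuclideanSpace.inner_single_left, EuclideanSpace.inner_single_right, mul_comm]
    rw [Finset.sum_congr rfl (fun t _ => h2 t)] at h
    rw [h]
    by_cases hij : i = j <;> simp [hij, EuclideanSpace.single_apply, eq_comm,
      EuclideanSpace.inner_single_left]
  -- definition of y
  set y : Fin m → E q := fun i => WithLp.toLp 2 (fun c => Real.sqrt (m / q) * B (Sum.inr c) i : Fin q → ℝ)
    with hy
  have hsq2 : Real.sqrt ((m:ℝ) / q) * Real.sqrt ((m:ℝ) / q) = (m:ℝ)/q :=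
    Real.mul_self_sqrt (by positivity)
  -- inner products of the y's
  have hyin : ∀ i j : Fin m, ⟪y i, y j⟫
      = ((m:ℝ)/q) * ((if i = j then (1:ℝ) else 0) - ((p:ℝ)/m) * ⟪x i, x j⟫) := by
    intro i j
    have hsplit : ∑ t, B t i * B t j
        = ∑ a : Fin p, w a i * w a j + ∑ c : Fin q, B (Sum.inr c) i * B (Sum.inr c) j := by
      rw [Fintype.sum_sum_type]
      congr 1
      exact Finset.sum_congr rfl fun a _ => by rw [hBw a]
    have hwij : ∑ a : Fin p, w a i * w a j = ((p:ℝ)/m) * ⟪x i, x j⟫ := by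
      rw [inner_E, Finset.mul_sum]
      refine Finset.sum_congr rfl fun a _ => ?_
      show (Real.sqrt _ * x i a) * (Real.sqrt _ * x j a) = _
      rw [mul_mul_mul_comm, hsq]
    have hrest : ∑ c : Fin q, B (Sum.inr c) i * B (Sum.inr c) j
        = (if i = j then (1:ℝ) else 0) - ((p:ℝ)/m) * ⟪x i, x j⟫ := by
      have := hcol i j
      rw [hsplit, hwij] at this
      linarith
    rw [inner_E]
    have h1 : ∀ c : Fin q, y i c * y j c = ((m:ℝ)/q) * (B (Sum.inr c) i * B (Sum.inr c) j) := by
      intro c; show (Real.sqrt _ * _) * (Real.sqrt _ * _) = _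
      rw [mul_mul_mul_comm, hsq2]
    rw [Finset.sum_congr rfl (fun c _ => h1 c), ← Finset.mul_sum, hrest]
  have hqm : (1:ℝ) - (p:ℝ)/m = (q:ℝ)/m := by
    field_simp; rw [hm]; push_cast; ring
  refine ⟨y, ?_, ?_, ?_⟩
  · -- unit norm
    intro i
    have h := hyin i i
    rw [if_pos rfl, real_inner_self_eq_norm_sq] at h
    have hx : ⟪x i, x i⟫ = 1 := by
      rw [real_inner_self_eq_norm_sq, hx1 i]; norm_num
    rw [hx] at h
    have : ‖y i‖ ^ 2 = 1 := by
      rw [h, mul_one, hqm]; field_simp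
    nlinarith [norm_nonneg (y i)]
  · -- tightness
    intro v
    ext c'
    rw [WithLp.ofLp_sum, Finset.sum_apply]
    simp only [PiLp.smul_apply, smul_eq_mul]
    have hyy : ∀ c c' : Fin q, ∑ i, y i c * y i c' = ((m:ℝ)/q) * (if c = c' then 1 else 0) := by
      intro c c'
      have h1 : ∀ i : Fin m, y i c * y i c'
          = ((m:ℝ)/q) * (B (Sum.inr c) i * B (Sum.inr c') i) := by
        intro i; show (Real.sqrt _ * _) * (Real.sqrt _ * _) = _
        rw [mul_mul_mul_comm, hsq2]
      rw [Finset.sum_congr rfl (fun i _ => h1 i), ← Finset.mul_sum]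
      congr 1
      have := B.orthonormal
      rw [orthonormal_iff_ite] at this
      have h2 := this (Sum.inr c) (Sum.inr c')
      rw [inner_E] at h2
      rw [h2]
      by_cases hcc : c = c' <;> simp [hcc]
    calc ∑ i, ⟪y i, v⟫ * y i c'
        = ∑ i, ∑ c, (v c * (y i c * y i c')) := by
          refine Finset.sum_congr rfl fun i _ => ?_
          rw [inner_E, Finset.sum_mul]
          exact Finset.sum_congr rfl fun c _ => by ring
      _ = ∑ c, v c * ∑ i, (y i c * y i c') := by
          rw [Finset.sum_comm]
          exact Finset.sum_congr rfl fun c _ => by rw [Finset.mul_sum]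
      _ = ∑ c, v c * (((m:ℝ)/q) * (if c = c' then 1 else 0)) := by
          exact Finset.sum_congr rfl fun c _ => by rw [hyy c c']
      _ = ((m:ℝ)/q) * v c' := by
          rw [Finset.sum_eq_single c']
          · simp [mul_comm]
          · intro b _ hb; simp [hb]
          · intro h; exact absurd (Finset.mem_univ c') h
  · -- inner product relation
    intro i j hij
    rw [hyin i j, if_neg hij]
    field_simp
    ring

lemma abs_cos_add_int (x : ℝ) (k : ℤ) : |Real.cos (x + k * π)| = |Real.cos x| := by
  rw [Real.cos_add, Real.sin_int_mul_pi, mul_zero, sub_zero, abs_mul]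
  have h1 : Real.sin ((k:ℝ) * π) = 0 := Real.sin_int_mul_pi k
  have h2 : Real.cos ((k:ℝ)*π)^2 = 1 := by
    have := Real.sin_sq_add_cos_sq ((k:ℝ)*π)
    rw [h1] at this; nlinarith
  have : |Real.cos ((k:ℝ)*π)| = 1 := by
    rw [← Real.sqrt_sq_eq_abs, h2, Real.sqrt_one]
  rw [this, mul_one]

/-- pigeonhole: among m unit vectors in the plane, two lines are at angle ≤ π/m -/
lemma plane_pigeonhole {m : ℕ} (hm : 2 ≤ m) (v : Fin m → E 2) (h1 : ∀ i, ‖v i‖ = 1) :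
    ∃ i j, i ≠ j ∧ Real.cos (π / m) ≤ |⟪v i, v j⟫| := by
  have hmR : (0:ℝ) < m := by positivity
  -- angles
  set z : Fin m → ℂ := fun i => ⟨v i 0, v i 1⟩ with hz
  have habs : ∀ i, ‖z i‖ = 1 := by
    intro i
    have : ‖v i‖^2 = 1 := by rw [h1 i]; norm_num
    rw [← real_inner_self_eq_norm_sq, inner_E, Fin.sum_univ_two] at this
    rw [Complex.norm_def, Complex.normSq_mk]
    rw [show v i 0 * v i 0 + v i 1 * v i 1 = 1 from this, Real.sqrt_one]
  have hz0 : ∀ i, z i ≠ 0 := by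
    intro i h
    have := habs i; rw [h] at this; simp at this
  set φ : Fin m → ℝ := fun i => Complex.arg (z i) with hφ
  have hcos : ∀ i, Real.cos (φ i) = v i 0 := by
    intro i; rw [hφ]; rw [Complex.cos_arg (hz0 i), habs i]; simp [hz]
  have hsin : ∀ i, Real.sin (φ i) = v i 1 := by
    intro i; rw [hφ]; rw [Complex.sin_arg, habs i]; simp [hz]
  have hinner : ∀ i j, ⟪v i, v j⟫ = Real.cos (φ i - φ j) := by
    intro i j
    rw [inner_E, Fin.sum_univ_two, Real.cos_sub, hcos, hcos, hsin, hsin]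
  -- reduced angles in [0, π)
  set θ : Fin m → ℝ := fun i => π * Int.fract (φ i / π) with hθ
  have hθ0 : ∀ i, 0 ≤ θ i := fun i => by
    have := Int.fract_nonneg (φ i / π); positivity
  have hθπ : ∀ i, θ i < π := by
    intro i
    have := Int.fract_lt_one (φ i / π)
    calc π * Int.fract (φ i / π) < π * 1 := by
          exact (mul_lt_mul_iff_right₀ Real.pi_pos).mpr this
      _ = π := mul_one π
  have hdiff : ∀ i j, |Real.cos (θ i - θ j)| = |⟪v i, v j⟫| := by
    intro i j
    rw [hinner i j]
    have : θ i - θ j = (φ i - φ j) + ((⌊φ j / π⌋ - ⌊φ i / π⌋ : ℤ) : ℝ) * π := by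
      simp only [hθ, Int.fract]
      push_cast
      field_simp
      ring
    rw [this, abs_cos_add_int]
  -- sort
  set σ := Tuple.sort θ with hσ
  have hmono : Monotone (θ ∘ σ) := Tuple.monotone_sort θ
  set g : ℕ → ℝ := fun k => if h : k < m then θ (σ ⟨k, h⟩) else π + θ (σ ⟨0, by omega⟩) with hg
  have hgm : g m = π + g 0 := by
    rw [hg]; simp [Nat.lt_irrefl, show 0 < m by omega]
  have htel : ∑ k ∈ Finset.range m, (g (k+1) - g k) = π := by
    rw [Finset.sum_range_sub g, hgm]; ring
  -- some gap is ≤ π/m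
  have hgap : ∃ k < m, g (k+1) - g k ≤ π / m := by
    by_contra hcon
    push_neg at hcon
    have : ∑ k ∈ Finset.range m, (g (k+1) - g k) > ∑ k ∈ Finset.range m, π/m := by
      apply Finset.sum_lt_sum_of_nonempty
      · exact ⟨0, Finset.mem_range.mpr (by omega)⟩
      · intro k hk; exact hcon k (Finset.mem_range.mp hk)
    rw [htel, Finset.sum_const, Finset.card_range, nsmul_eq_mul] at this
    rw [mul_div_cancel₀ π (ne_of_gt hmR)] at this
    exact lt_irrefl π this
  obtain ⟨k, hk, hkle⟩ := hgap
  have hπm_pos : 0 < π / m := by positivity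
  have hπm_le : π / m ≤ π :=
    div_le_self Real.pi_pos.le (by exact_mod_cast (by omega : 1 ≤ m))
  by_cases hk1 : k + 1 < m
  · -- interior gap
    set i := σ ⟨k+1, hk1⟩
    set j := σ ⟨k, hk⟩
    have hij : i ≠ j := by
      intro h
      have := σ.injective h
      simp [Fin.ext_iff] at this
    refine ⟨i, j, hij, ?_⟩
    have hle : θ j ≤ θ i := hmono (by simp [Fin.le_def])
    have hgapval : θ i - θ j ≤ π / m := by
      have : g (k+1) - g k = θ i - θ j := by
        rw [hg]; simp [hk1, hk]; rfl
      linarith [hkle, this.symm.le, this.le]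
    rw [← hdiff i j]
    have h1 : Real.cos (π/m) ≤ Real.cos (θ i - θ j) :=
      Real.cos_le_cos_of_nonneg_of_le_pi (by linarith) hπm_le hgapval
    exact le_trans h1 (le_abs_self _)
  · -- wrap-around gap
    obtain rfl : k = m - 1 := by omega
    set i := σ ⟨m-1, hk⟩ with hi
    set j := σ ⟨0, by omega⟩ with hj
    have hij : i ≠ j := by
      intro h
      have := σ.injective h
      simp [Fin.ext_iff] at this
      omega
    refine ⟨i, j, hij, ?_⟩
    have e1 : g (m-1+1) = π + θ j := by
      simp only [hg]
      rw [dif_neg hk1]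
    have e2 : g (m-1) = θ i := by
      simp only [hg]
      rw [dif_pos hk]
    rw [e1, e2] at hkle
    have hd1 : π - π/m ≤ θ i - θ j := by linarith
    have hd2 : θ i - θ j ≤ π := by
      have := hθπ i; have := hθ0 j; linarith
    rw [← hdiff i j]
    have h1 : Real.cos (θ i - θ j) ≤ Real.cos (π - π/m) :=
      Real.cos_le_cos_of_nonneg_of_le_pi (by linarith) hd2 hd1
    rw [Real.cos_pi_sub] at h1
    calc Real.cos (π/m) ≤ -Real.cos (θ i - θ j) := by linarith
      _ ≤ |Real.cos (θ i - θ j)| := neg_le_abs _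

lemma sum_exp_eq_zero {m : ℕ} (hm : 2 ≤ m) :
    ∑ k ∈ Finset.range m, Complex.exp (2 * π * Complex.I * k / m) = 0 := by
  have hmC : (m:ℂ) ≠ 0 := Nat.cast_ne_zero.mpr (by omega)
  have h2πI : (2 * π * Complex.I : ℂ) ≠ 0 := by
    simp [Real.pi_ne_zero, Complex.I_ne_zero]
  set ζ : ℂ := Complex.exp (2 * π * Complex.I / m) with hζ
  have hpow : ∀ k : ℕ, ζ ^ k = Complex.exp (2 * π * Complex.I * k / m) := by
    intro k
    rw [hζ, ← Complex.exp_nat_mul]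
    congr 1; ring
  have hζm : ζ ^ m = 1 := by
    rw [hpow m, show 2 * π * Complex.I * m / m = 2 * π * Complex.I by field_simp]
    exact Complex.exp_two_pi_mul_I
  have hζ1 : ζ ≠ 1 := by
    rw [hζ, Ne, Complex.exp_eq_one_iff]
    push_neg
    intro n h
    have h' : (n:ℂ) * (2 * π * Complex.I) * m = 2 * π * Complex.I := by
      rw [← h, div_mul_cancel₀ _ hmC]
    have h2 : (n * m : ℂ) = 1 := by
      have : (n * m : ℂ) * (2 * π * Complex.I) = 1 * (2 * π * Complex.I) := by
        rw [one_mul]; linear_combination h'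
      exact mul_right_cancel₀ h2πI this
    have h3 : (n * m : ℤ) = 1 := by exact_mod_cast h2
    have hdvd : (m:ℤ) ∣ 1 := ⟨n, by linarith⟩
    have := Int.le_of_dvd one_pos hdvd
    omega
  have hgeom := geom_sum_eq hζ1 m
  rw [hζm] at hgeom
  calc ∑ k ∈ Finset.range m, Complex.exp (2 * π * Complex.I * k / m)
      = ∑ k ∈ Finset.range m, ζ ^ k := by
        exact Finset.sum_congr rfl fun k _ => (hpow k).symm
    _ = 0 := by rw [hgeom]; simp

lemma sum_cos_eq_zero {m : ℕ} (hm : 2 ≤ m) :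
    ∑ k ∈ Finset.range m, Real.cos (2 * (k * π / m)) = 0 := by
  have h := sum_exp_eq_zero hm
  have hre : ∀ k : ℕ, (Complex.exp (2 * π * Complex.I * k / m)).re
      = Real.cos (2 * (k * π / m)) := by
    intro k
    rw [show (2 * π * Complex.I * k / m : ℂ) = ((2 * (k * π / m) : ℝ) : ℂ) * Complex.I by
      push_cast; ring]
    rw [Complex.exp_ofReal_mul_I_re]
  calc ∑ k ∈ Finset.range m, Real.cos (2 * (k * π / m))
      = (∑ k ∈ Finset.range m, Complex.exp (2 * π * Complex.I * k / m)).re := by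
        rw [Complex.re_sum]
        exact Finset.sum_congr rfl fun k _ => (hre k).symm
    _ = 0 := by rw [h]; rfl

lemma sum_sin_eq_zero {m : ℕ} (hm : 2 ≤ m) :
    ∑ k ∈ Finset.range m, Real.sin (2 * (k * π / m)) = 0 := by
  have h := sum_exp_eq_zero hm
  have him : ∀ k : ℕ, (Complex.exp (2 * π * Complex.I * k / m)).im
      = Real.sin (2 * (k * π / m)) := by
    intro k
    rw [show (2 * π * Complex.I * k / m : ℂ) = ((2 * (k * π / m) : ℝ) : ℂ) * Complex.I by
      push_cast; ring]
    rw [Complex.exp_ofReal_mul_I_im]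
  calc ∑ k ∈ Finset.range m, Real.sin (2 * (k * π / m))
      = (∑ k ∈ Finset.range m, Complex.exp (2 * π * Complex.I * k / m)).im := by
        rw [Complex.im_sum]
        exact Finset.sum_congr rfl fun k _ => (him k).symm
    _ = 0 := by rw [h]; rfl

lemma harm_tight {m : ℕ} (hm : 2 ≤ m) (w : E 2) :
    ∑ k, ⟪harm m k, w⟫ • harm m k = ((m:ℝ)/2) • w := by
  have hc2 : ∑ k ∈ Finset.range m, Real.cos ((k:ℝ)*π/m)^2 = (m:ℝ)/2 := by
    have h : ∀ k ∈ Finset.range m, Real.cos ((k:ℝ)*π/m)^2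
        = 1/2 + Real.cos (2*((k:ℝ)*π/m))/2 := fun k _ => Real.cos_sq _
    rw [Finset.sum_congr rfl h, Finset.sum_add_distrib, Finset.sum_const, Finset.card_range,
      ← Finset.sum_div, sum_cos_eq_zero hm]
    simp [nsmul_eq_mul]; ring
  have hs2 : ∑ k ∈ Finset.range m, Real.sin ((k:ℝ)*π/m)^2 = (m:ℝ)/2 := by
    have h : ∀ k ∈ Finset.range m, Real.sin ((k:ℝ)*π/m)^2
        = 1 - Real.cos ((k:ℝ)*π/m)^2 := fun k _ => Real.sin_sq _
    rw [Finset.sum_congr rfl h, Finset.sum_sub_distrib, Finset.sum_const, Finset.card_range,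
      hc2]
    simp [nsmul_eq_mul]; ring
  have hcs : ∑ k ∈ Finset.range m, Real.sin ((k:ℝ)*π/m) * Real.cos ((k:ℝ)*π/m) = 0 := by
    have h : ∀ k ∈ Finset.range m, Real.sin ((k:ℝ)*π/m) * Real.cos ((k:ℝ)*π/m)
        = Real.sin (2*((k:ℝ)*π/m))/2 := by
      intro k _; rw [Real.sin_two_mul]; ring
    rw [Finset.sum_congr rfl h, ← Finset.sum_div, sum_sin_eq_zero hm]
    norm_num
  ext c
  rw [WithLp.ofLp_sum, Finset.sum_apply]
  simp only [PiLp.smul_apply, smul_eq_mul]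
  have hip : ∀ k : Fin m, ⟪harm m k, w⟫
      = Real.cos ((k:ℝ)*π/m) * w 0 + Real.sin ((k:ℝ)*π/m) * w 1 := by
    intro k
    rw [inner_E, Fin.sum_univ_two]
    show (if (0:Fin 2) = 0 then Real.cos ((k:ℝ)*π/m) else Real.sin ((k:ℝ)*π/m)) * w 0 + (if (1:Fin 2) = 0 then Real.cos ((k:ℝ)*π/m) else Real.sin ((k:ℝ)*π/m)) * w 1 = _
    norm_num
  fin_cases c
  · show ∑ k : Fin m, ⟪harm m k, w⟫ * harm m k 0 = (m:ℝ)/2 * w 0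
    have hval : ∀ k : Fin m, ⟪harm m k, w⟫ * harm m k 0
        = w 0 * Real.cos ((k:ℝ)*π/m)^2
          + w 1 * (Real.sin ((k:ℝ)*π/m) * Real.cos ((k:ℝ)*π/m)) := by
      intro k
      rw [hip k]
      show _ * (if (0:Fin 2) = 0 then Real.cos ((k:ℝ)*π/m) else Real.sin ((k:ℝ)*π/m)) = _
      norm_num; ring
    rw [Finset.sum_congr rfl fun k _ => hval k, Finset.sum_add_distrib,
      ← Finset.mul_sum, ← Finset.mul_sum]
    rw [Fin.sum_univ_eq_sum_range (fun k => Real.cos ((k:ℝ)*π/m)^2),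
      Fin.sum_univ_eq_sum_range (fun k => Real.sin ((k:ℝ)*π/m) * Real.cos ((k:ℝ)*π/m))] at *
    rw [hc2, hcs]
    show _ = (m:ℝ)/2 * w 0
    ring
  · show ∑ k : Fin m, ⟪harm m k, w⟫ * harm m k 1 = (m:ℝ)/2 * w 1
    have hval : ∀ k : Fin m, ⟪harm m k, w⟫ * harm m k 1
        = w 1 * Real.sin ((k:ℝ)*π/m)^2
          + w 0 * (Real.sin ((k:ℝ)*π/m) * Real.cos ((k:ℝ)*π/m)) := by
      intro k
      rw [hip k]
      show _ * (if (1:Fin 2) = 0 then Real.cos ((k:ℝ)*π/m) else Real.sin ((k:ℝ)*π/m)) = _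
      norm_num; ring
    rw [Finset.sum_congr rfl fun k _ => hval k, Finset.sum_add_distrib,
      ← Finset.mul_sum, ← Finset.mul_sum]
    rw [Fin.sum_univ_eq_sum_range (fun k => Real.sin ((k:ℝ)*π/m)^2),
      Fin.sum_univ_eq_sum_range (fun k => Real.sin ((k:ℝ)*π/m) * Real.cos ((k:ℝ)*π/m))] at *
    rw [hs2, hcs]
    show _ = (m:ℝ)/2 * w 1
    ring

lemma harm_inner {m : ℕ} (i j : Fin m) :
    ⟪harm m i, harm m j⟫ = Real.cos (((i:ℕ):ℝ) * π / m - ((j:ℕ):ℝ) * π / m) := by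
  rw [inner_E, Fin.sum_univ_two, Real.cos_sub]
  show Real.cos _ * Real.cos _ + Real.sin _ * Real.sin _ = _
  ring

lemma harm_inner_le {m : ℕ} (hm : 2 ≤ m) {i j : Fin m} (hij : i ≠ j) :
    |⟪harm m i, harm m j⟫| ≤ Real.cos (π / m) := by
  have hmR : (0:ℝ) < m := by positivity
  rw [harm_inner]
  have key : ∀ a b : ℕ, a < b → b < m →
      (1:ℝ) ≤ |(a:ℝ) - (b:ℝ)| ∧ |(a:ℝ) - (b:ℝ)| ≤ (m:ℝ) - 1 := by
    intro a b hab hbm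
    have habR : (a:ℝ) < b := by exact_mod_cast hab
    rw [abs_sub_comm, abs_of_nonneg (by linarith)]
    constructor
    · have : ((a:ℕ):ℝ) + 1 ≤ b := by exact_mod_cast Nat.succ_le_of_lt hab
      linarith
    · have h1 : ((b:ℕ):ℝ) + 1 ≤ m := by exact_mod_cast Nat.succ_le_of_lt hbm
      have h2 : (0:ℝ) ≤ a := by positivity
      linarith
  have hbounds : (1:ℝ) ≤ |((i:ℕ):ℝ) - ((j:ℕ):ℝ)| ∧ |((i:ℕ):ℝ) - ((j:ℕ):ℝ)| ≤ (m:ℝ) - 1 := by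
    rcases lt_trichotomy (i:ℕ) (j:ℕ) with h | h | h
    · exact key i j h j.isLt
    · exact absurd (Fin.ext h) hij
    · rw [abs_sub_comm]; exact key j i h i.isLt
  obtain ⟨hd1, hd2⟩ := hbounds
  set u : ℝ := |((i:ℕ):ℝ) - ((j:ℕ):ℝ)| * π / m with hu
  have habs : Real.cos (((i:ℕ):ℝ) * π / m - ((j:ℕ):ℝ) * π / m) = Real.cos u := by
    rw [← Real.cos_abs]
    congr 1
    rw [show ((i:ℕ):ℝ) * π / m - ((j:ℕ):ℝ) * π / m = (((i:ℕ):ℝ) - ((j:ℕ):ℝ)) * π / m by ring,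
      abs_div, abs_mul, abs_of_pos Real.pi_pos, abs_of_pos hmR]
  rw [habs]
  have hu1 : π / m ≤ u := by
    rw [hu, div_le_div_iff_of_pos_right hmR]
    nlinarith [Real.pi_pos]
  have hu2 : u ≤ π - π / m := by
    rw [hu]
    have h3 : |((i:ℕ):ℝ) - ((j:ℕ):ℝ)| * π ≤ ((m:ℝ) - 1) * π := by nlinarith [Real.pi_pos]
    calc |((i:ℕ):ℝ) - ((j:ℕ):ℝ)| * π / m ≤ ((m:ℝ)-1) * π / m :=
          div_le_div_of_nonneg_right h3 hmR.le |>.trans_eq rfl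
      _ = π - π/m := by field_simp
  have hπm : 0 < π / m := by positivity
  have hcub : Real.cos u ≤ Real.cos (π/m) :=
    Real.cos_le_cos_of_nonneg_of_le_pi (by positivity) (by linarith) hu1
  have hclb : Real.cos (π - u) ≤ Real.cos (π/m) :=
    Real.cos_le_cos_of_nonneg_of_le_pi (by positivity) (by linarith) (by linarith)
  rw [Real.cos_pi_sub] at hclb
  exact abs_le.mpr ⟨by linarith, hcub⟩

lemma harm_inner_10 {m : ℕ} (hm : 2 ≤ m) :
    ⟪harm m ⟨1, by omega⟩, harm m ⟨0, by omega⟩⟫ = Real.cos (π / m) := by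
  rw [harm_inner]
  norm_num

lemma cos_pi_div_nonneg {m : ℕ} (hm : 2 ≤ m) : 0 ≤ Real.cos (π / m) := by
  have hmR : (0:ℝ) < m := by positivity
  have h2 : (2:ℝ) ≤ m := by exact_mod_cast hm
  apply Real.cos_nonneg_of_mem_Icc
  constructor
  · have : (0:ℝ) ≤ π/m := by positivity
    linarith [Real.pi_pos]
  · rw [div_le_div_iff₀ hmR (by norm_num : (0:ℝ) < 2)]
    nlinarith [Real.pi_pos]

lemma cohF_bddAbove {N m : ℕ} (x : Fin m → E N) :
    BddAbove {r : ℝ | ∃ i j : Fin m, i ≠ j ∧ r = |⟪x i, x j⟫|} := by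
  apply Set.Finite.bddAbove
  apply Set.Finite.subset (Set.finite_range (fun p : Fin m × Fin m => |⟪x p.1, x p.2⟫|))
  rintro r ⟨i, j, _, rfl⟩
  exact ⟨(i, j), rfl⟩

lemma le_cohF {N m : ℕ} {x : Fin m → E N} {i j : Fin m} (hij : i ≠ j) :
    |⟪x i, x j⟫| ≤ cohF x :=
  le_csSup (cohF_bddAbove x) ⟨i, j, hij, rfl⟩

lemma cohF_eq {N m : ℕ} {x : Fin m → E N} {c : ℝ}
    (hmem : ∃ i j : Fin m, i ≠ j ∧ c = |⟪x i, x j⟫|)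
    (hub : ∀ i j : Fin m, i ≠ j → |⟪x i, x j⟫| ≤ c) : cohF x = c := by
  apply IsGreatest.csSup_eq
  constructor
  · exact hmem
  · rintro r ⟨i, j, hij, rfl⟩
    exact hub i j hij


theorem mu_n_add_two (n : ℕ) (hn : 2 ≤ n) :
    muConst (n + 2) n = (2 / (n : ℝ)) * Real.cos (Real.pi / (n + 2)) := by
  set m := n + 2 with hmdef
  have hm4 : 2 ≤ m := by omega
  have hnR : (0:ℝ) < n := by exact_mod_cast (by omega : 0 < n)
  have hcosnn : 0 ≤ Real.cos (π/(m:ℝ)) := cos_pi_div_nonneg hm4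
  set c : ℝ := (2 / (n:ℝ)) * Real.cos (π / (m:ℝ)) with hc
  -- upper bound witness by Naimark complement of the harmonic frame
  obtain ⟨y, hy1, hyt, hyin⟩ := naimark (p:=2) (q:=n) (m:=m) (by norm_num) (by omega)
      (by omega) (harm m) harm_norm (by
        intro w
        rw [show (((2:ℕ)):ℝ) = (2:ℝ) by norm_num]
        exact harm_tight hm4 w)
  have h2n : (0:ℝ) < 2/(n:ℝ) := by positivity
  have habsy : ∀ i j : Fin m, i ≠ j → |⟪y i, y j⟫| = (2/(n:ℝ)) * |⟪harm m i, harm m j⟫| := by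
    intro i j hij
    rw [hyin i j hij]
    rw [show (-(((2:ℕ):ℝ)/(n:ℝ))) = -((2:ℝ)/(n:ℝ)) by norm_num]
    rw [abs_mul, abs_neg, abs_of_pos h2n]
  have hcohy : cohF y = c := by
    apply cohF_eq
    · refine ⟨⟨1, by omega⟩, ⟨0, by omega⟩, by simp [Fin.ext_iff], ?_⟩
      rw [habsy _ _ (by simp [Fin.ext_iff]), harm_inner_10 hm4, abs_of_nonneg hcosnn, hc]
    · intro i j hij
      rw [habsy i j hij, hc]
      exact mul_le_mul_of_nonneg_left (harm_inner_le hm4 hij) h2n.le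
  have hmem : c ∈ {r : ℝ | ∃ x : Fin m → E n, (∀ i, ‖x i‖ = 1) ∧
      (∀ v : E n, ∑ i, ⟪x i, v⟫ • x i = ((m : ℝ) / n) • v) ∧ cohF x = r} :=
    ⟨y, hy1, hyt, hcohy⟩
  -- lower bound
  have hlb : ∀ r ∈ {r : ℝ | ∃ x : Fin m → E n, (∀ i, ‖x i‖ = 1) ∧
      (∀ v : E n, ∑ i, ⟪x i, v⟫ • x i = ((m : ℝ) / n) • v) ∧ cohF x = r}, c ≤ r := by
    rintro r ⟨x, hx1, hxt, rfl⟩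
    obtain ⟨z, hz1, _, hzin⟩ := naimark (p:=n) (q:=2) (m:=m) (by omega) (by norm_num)
        (by omega) x hx1 hxt
    obtain ⟨i, j, hij, hge⟩ := plane_pigeonhole hm4 z hz1
    have habs : |⟪z i, z j⟫| = ((n:ℝ)/2) * |⟪x i, x j⟫| := by
      rw [hzin i j hij]
      rw [show (-((n:ℝ)/((2:ℕ):ℝ))) = -((n:ℝ)/(2:ℝ)) by norm_num]
      rw [abs_mul, abs_neg, abs_of_pos (by positivity)]
    rw [habs] at hge
    have h3 : c ≤ |⟪x i, x j⟫| := by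
      rw [hc]
      rw [div_mul_eq_mul_div, div_le_iff₀ hnR]
      nlinarith [hge]
    exact h3.trans (le_cohF hij)
  have : sInf {r : ℝ | ∃ x : Fin m → E n, (∀ i, ‖x i‖ = 1) ∧
      (∀ v : E n, ∑ i, ⟪x i, v⟫ • x i = ((m : ℝ) / n) • v) ∧ cohF x = r} = c :=
    le_antisymm (csInf_le ⟨c, hlb⟩ hmem) (le_csInf ⟨c, hmem⟩ hlb)
  calc muConst m n = c := this
    _ = (2 / (n : ℝ)) * Real.cos (Real.pi / (n + 2)) := by
        rw [hc]
        congr 2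
        rw [hmdef]
        push_cast
        ring
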